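/- An n×n real matrix A is tropical totally nonnegative if and only if all of its 2×2 tropical minors are tropically nonnegative, that is, if and only if A_{i,j} + A_{i′,j′} ≥ A_{i,j′} + A_{i′,j} for all i < i′ and j < j′ (equivalently, −A is a Monge matrix); in symbols, TNtrop(ℝ) = TN₂trop(ℝ). -/

import Mathlib

open Finset

/-- Truncated predecessor in `Fin n` (1-indexed entry `i-1`). -/
def fpred {n : ℕ} (j : Fin n) : Fin n :=
  ⟨j.val - 1, Nat.lt_of_le_of_lt (Nat.sub_le _ _) j.isLt⟩

/-- `ψ(W)_{i,j}` is the tropical weight of the uppermost path from source `i`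
to target `j` in the canonical planar network `G_n`. -/
def psi (n : ℕ) (W : Matrix (Fin n) (Fin n) ℝ) : Matrix (Fin n) (Fin n) ℝ :=
  fun i j => if i ≤ j then ∑ t ∈ Finset.Icc i j, W i t else ∑ t ∈ Finset.Icc j i, W t j

/-- The map `φ`, inverse of `ψ`. -/
def phi (n : ℕ) (A : Matrix (Fin n) (Fin n) ℝ) : Matrix (Fin n) (Fin n) ℝ :=
  fun i j =>
    if i = j then A i j
    else if i < j then A i j - A i (fpred j)
    else A i j - A (fpred i) j

/-- Weak trapeze inequalities. -/
def WeakTrapeze (n : ℕ) (W : Matrix (Fin n) (Fin n) ℝ) : Prop :=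
  ∀ i : Fin n, 0 < i.val →
    W i (fpred i) + W (fpred i) (fpred i) + W (fpred i) i ≤ W i i

/-- Strict trapeze inequalities. -/
def StrictTrapeze (n : ℕ) (W : Matrix (Fin n) (Fin n) ℝ) : Prop :=
  ∀ i : Fin n, 0 < i.val →
    W i (fpred i) + W (fpred i) (fpred i) + W (fpred i) i < W i i

/-- Weak parallelogram inequalities. -/
def WeakPara (n : ℕ) (W : Matrix (Fin n) (Fin n) ℝ) : Prop :=
  ∀ i j : Fin n, ∀ _h : j.val + 2 ≤ i.val,
    W i j ≤ W i ⟨j.val + 1, by have := i.isLt; omega⟩ ∧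
    W j i ≤ W ⟨j.val + 1, by have := i.isLt; omega⟩ i

/-- Strict parallelogram inequalities. -/
def StrictPara (n : ℕ) (W : Matrix (Fin n) (Fin n) ℝ) : Prop :=
  ∀ i j : Fin n, ∀ _h : j.val + 2 ≤ i.val,
    W i j < W i ⟨j.val + 1, by have := i.isLt; omega⟩ ∧
    W j i < W ⟨j.val + 1, by have := i.isLt; omega⟩ i

/-- Maximum, over the permutations of sign `ε`, of the tropical weight of the
permutation in the `k × k` matrix `B` (computed in `WithBot ℝ`, the maximum over
the empty set being `⊥ = -∞`). -/
def tropPermSup (k : ℕ) (ε : ℤˣ) (B : Matrix (Fin k) (Fin k) (WithBot ℝ)) : WithBot ℝ :=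
  (Finset.univ.filter fun σ : Equiv.Perm (Fin k) => Equiv.Perm.sign σ = ε).sup
    fun σ => ∑ i, B i (σ i)

/-- Tropical total nonnegativity of a matrix over `ℝ ∪ {-∞}`. -/
def IsTropTN (n : ℕ) (A : Matrix (Fin n) (Fin n) (WithBot ℝ)) : Prop :=
  ∀ (k : ℕ) (r c : Fin k → Fin n), StrictMono r → StrictMono c →
    tropPermSup k (-1) (A.submatrix r c) ≤ tropPermSup k 1 (A.submatrix r c)

/-- Tropical total positivity of a real matrix. -/
def IsTropTP (n : ℕ) (A : Matrix (Fin n) (Fin n) ℝ) : Prop :=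
  ∀ (k : ℕ), 2 ≤ k → ∀ (r c : Fin k → Fin n), StrictMono r → StrictMono c →
    tropPermSup k (-1) ((A.map ((↑) : ℝ → WithBot ℝ)).submatrix r c) <
      tropPermSup k 1 ((A.map ((↑) : ℝ → WithBot ℝ)).submatrix r c)

/-- Max-plus matrix product. -/
def tropMul {l m p : ℕ} (A : Matrix (Fin l) (Fin m) (WithBot ℝ))
    (B : Matrix (Fin m) (Fin p) (WithBot ℝ)) : Matrix (Fin l) (Fin p) (WithBot ℝ) :=
  fun i j => Finset.univ.sup fun k => A i k + B k j

/-- Tropical identity matrix. -/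
def tropId (n : ℕ) : Matrix (Fin n) (Fin n) (WithBot ℝ) :=
  fun i j => if i = j then 0 else ⊥

/-- Tropical elementary Jacobi matrix `x_i(s)` (0-indexed: `s` in position `(i, i+1)`). -/
def xUp (n : ℕ) (i : ℕ) (s : ℝ) : Matrix (Fin n) (Fin n) (WithBot ℝ) :=
  fun a b => if a = b then 0 else if a.val = i ∧ b.val = i + 1 then (s : WithBot ℝ) else ⊥

/-- Tropical elementary Jacobi matrix `x̄_i(s)` (0-indexed: `s` in position `(i+1, i)`). -/
def xLow (n : ℕ) (i : ℕ) (s : ℝ) : Matrix (Fin n) (Fin n) (WithBot ℝ) :=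
  fun a b => if a = b then 0 else if a.val = i + 1 ∧ b.val = i then (s : WithBot ℝ) else ⊥

/-- Tropical elementary Jacobi matrix `x∘_i(s)` (0-indexed diagonal matrix,
`s` in position `(i, i)`). -/
def xDiag (n : ℕ) (i : ℕ) (s : ℝ) : Matrix (Fin n) (Fin n) (WithBot ℝ) :=
  fun a b => if a = b then (if a.val = i then (s : WithBot ℝ) else 0) else ⊥

/-- Entry of `W` looked up with natural-number (0-based) indices. -/
def wnat (n : ℕ) (W : Matrix (Fin n) (Fin n) ℝ) (a b : ℕ) : ℝ :=
  if h : a < n ∧ b < n then W ⟨a, h.1⟩ ⟨b, h.2⟩ else 0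

/-- The left part `L(W)` of the canonical planar network:
`L(W) = ⊙_{k=1}^{n−1} ⊙_{t=1}^{k} x̄_{n−k+t−1}(W_{n−k+t, t})` (1-indexed). -/
def Lmat (n : ℕ) (W : Matrix (Fin n) (Fin n) ℝ) : Matrix (Fin n) (Fin n) (WithBot ℝ) :=
  ((List.range (n - 1)).flatMap fun k => (List.range (k + 1)).map fun t =>
      xLow n (n - k + t - 2) (wnat n W (n - k + t - 1) t)).foldl tropMul (tropId n)

/-- The diagonal part `D(W) = x∘_1(W_{1,1}) ⊙ ⋯ ⊙ x∘_n(W_{n,n})` (1-indexed). -/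
def Dmat (n : ℕ) (W : Matrix (Fin n) (Fin n) ℝ) : Matrix (Fin n) (Fin n) (WithBot ℝ) :=
  ((List.range n).map fun i => xDiag n i (wnat n W i i)).foldl tropMul (tropId n)

/-- The tropical transfer matrix of the canonical totally connected planar
network `G_n` with weight matrix `W`: `T(W) = L(W) ⊙ D(W) ⊙ (L(Wᵀ))ᵀ`. -/
def Tmat (n : ℕ) (W : Matrix (Fin n) (Fin n) ℝ) : Matrix (Fin n) (Fin n) (WithBot ℝ) :=
  tropMul (tropMul (Lmat n W) (Dmat n W)) (Matrix.transpose (Lmat n W.transpose))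


open Finset in
lemma sum_pair_split {k : ℕ} {M : Type*} [AddCommMonoid M] (g : Fin k → M) {i i' : Fin k}
    (h : i ≠ i') : ∑ j, g j = g i + g i' + ∑ j ∈ univ \ {i, i'}, g j := by
  have hsub : ({i, i'} : Finset (Fin k)) ⊆ univ := subset_univ _
  rw [← Finset.sum_sdiff hsub, Finset.sum_pair h]
  abel

lemma exists_descent {k : ℕ} (τ : Equiv.Perm (Fin k)) (hτ : τ ≠ 1) :
    ∃ i i' : Fin k, i.val + 1 = i'.val ∧ τ i' < τ i := by
  by_contra h
  push_neg at h
  haveI : WellFoundedLT (Fin k) := Finite.to_wellFoundedLT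
  have hmono : StrictMono τ := by
    rcases k with _ | m
    · intro a b _; exact a.elim0
    · rw [Fin.strictMono_iff_lt_succ]
      intro i
      have h1 : (Fin.castSucc i).val + 1 = (i.succ).val := rfl
      have h2 := h (Fin.castSucc i) i.succ h1
      rcases lt_or_eq_of_le h2 with h' | h'
      · exact h'
      · exfalso
        have h3 := congrArg Fin.val (τ.injective h')
        simp only [Fin.coe_castSucc, Fin.val_succ] at h3
        omega
  apply hτ
  ext x
  have h1 : x ≤ τ x := hmono.le_apply
  have hmono' : StrictMono (τ⁻¹ : Equiv.Perm (Fin k)) := by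
    intro a b hab
    by_contra hc
    push_neg at hc
    rcases lt_or_eq_of_le hc with h' | h'
    · have := hmono h'
      simp only [Equiv.Perm.coe_inv, Equiv.apply_symm_apply] at this
      exact absurd hab (lt_asymm this)
    · have := congrArg τ h'
      simp only [Equiv.Perm.coe_inv, Equiv.apply_symm_apply] at this
      rw [this] at hab
      exact lt_irrefl _ hab
  have h2 : τ x ≤ τ⁻¹ (τ x) := hmono'.le_apply
  simp only [Equiv.Perm.coe_inv, Equiv.symm_apply_apply] at h2
  have h3 : τ x = x := le_antisymm h2 h1
  simp [h3]

open Finset in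
lemma monge_sum_perm_le {k : ℕ} (B : Matrix (Fin k) (Fin k) ℝ)
    (hB : ∀ (i i' j j' : Fin k), i < i' → j < j' → B i j' + B i' j ≤ B i j + B i' j')
    (σ : Equiv.Perm (Fin k)) : ∑ i, B i (σ i) ≤ ∑ i, B i i := by
  set M : Equiv.Perm (Fin k) → ℕ := fun τ => ∑ i, i.val * (τ i).val with hM
  have hMb : ∀ τ, M τ ≤ k * k * k := by
    intro τ
    calc M τ ≤ ∑ _i : Fin k, k * k :=
          Finset.sum_le_sum fun i _ => Nat.mul_le_mul (le_of_lt i.isLt) (le_of_lt (τ i).isLt)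
      _ = k * k * k := by simp [mul_comm]
  -- step: if τ ≠ 1, we can improve
  have step : ∀ τ : Equiv.Perm (Fin k), τ ≠ 1 →
      ∃ τ' : Equiv.Perm (Fin k), (∑ i, B i (τ i) ≤ ∑ i, B i (τ' i)) ∧ M τ < M τ' := by
    intro τ hτ
    obtain ⟨i, i', hii, hdesc⟩ := exists_descent τ hτ
    have hne : i ≠ i' := by intro h; rw [h] at hii; omega
    have hlt : i < i' := by rw [Fin.lt_iff_val_lt_val]; omega
    refine ⟨τ * Equiv.swap i i', ?_, ?_⟩
    · set τ' := τ * Equiv.swap i i' with hτ'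
      have ht'i : τ' i = τ i' := by simp [hτ', Equiv.swap_apply_left]
      have ht'i' : τ' i' = τ i := by simp [hτ', Equiv.swap_apply_right]
      have ht'o : ∀ j, j ≠ i → j ≠ i' → τ' j = τ j := by
        intro j h1 h2; simp [hτ', Equiv.swap_apply_of_ne_of_ne h1 h2]
      rw [sum_pair_split (fun j => B j (τ j)) hne, sum_pair_split (fun j => B j (τ' j)) hne]
      have hrest : ∑ j ∈ univ \ {i, i'}, B j (τ j) = ∑ j ∈ univ \ {i, i'}, B j (τ' j) := by
        refine Finset.sum_congr rfl fun j hj => ?_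
        simp only [mem_sdiff, mem_insert, mem_singleton] at hj
        push_neg at hj
        rw [ht'o j hj.2.1 hj.2.2]
      rw [hrest]
      gcongr ?_ + _
      rw [ht'i, ht'i']
      exact hB i i' (τ i') (τ i) hlt hdesc
    · set τ' := τ * Equiv.swap i i' with hτ'
      have ht'i : τ' i = τ i' := by simp [hτ', Equiv.swap_apply_left]
      have ht'i' : τ' i' = τ i := by simp [hτ', Equiv.swap_apply_right]
      have ht'o : ∀ j, j ≠ i → j ≠ i' → τ' j = τ j := by
        intro j h1 h2; simp [hτ', Equiv.swap_apply_of_ne_of_ne h1 h2]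
      have e1 : M τ = i.val * (τ i).val + i'.val * (τ i').val
          + ∑ j ∈ univ \ {i, i'}, j.val * (τ j).val :=
        sum_pair_split (fun j => j.val * (τ j).val) hne
      have e2 : M τ' = i.val * (τ' i).val + i'.val * (τ' i').val
          + ∑ j ∈ univ \ {i, i'}, j.val * (τ' j).val :=
        sum_pair_split (fun j => j.val * (τ' j).val) hne
      have hrest : ∑ j ∈ univ \ {i, i'}, j.val * (τ j).val
          = ∑ j ∈ univ \ {i, i'}, j.val * (τ' j).val := by
        refine Finset.sum_congr rfl fun j hj => ?_
        simp only [mem_sdiff, mem_insert, mem_singleton] at hj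
        push_neg at hj
        rw [ht'o j hj.2.1 hj.2.2]
      rw [e1, e2, ht'i, ht'i', hrest]
      have hkey : i.val * (τ i).val + i'.val * (τ i').val
          < i.val * (τ i').val + i'.val * (τ i).val := by
        have ha : i.val < i'.val := by omega
        have hb : (τ i').val < (τ i).val := hdesc
        nlinarith
      exact Nat.add_lt_add_right hkey _
  -- main induction
  suffices H : ∀ d : ℕ, ∀ τ : Equiv.Perm (Fin k), k * k * k - M τ ≤ d →
      ∑ i, B i (τ i) ≤ ∑ i, B i i by
    exact H (k * k * k - M σ) σ le_rfl
  intro d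
  induction d with
  | zero =>
    intro τ hd
    by_cases hτ : τ = 1
    · subst hτ; simp
    · obtain ⟨τ', _, hlt⟩ := step τ hτ
      have := hMb τ'
      omega
  | succ d ih =>
    intro τ hd
    by_cases hτ : τ = 1
    · subst hτ; simp
    · obtain ⟨τ', hle, hlt⟩ := step τ hτ
      have hb' := hMb τ'
      exact le_trans hle (ih τ' (by omega))

lemma perm_fin_two (σ : Equiv.Perm (Fin 2)) : σ = 1 ∨ σ = Equiv.swap 0 1 := by
  have hinj : σ 0 ≠ σ 1 := fun hc => by
    have := congrArg Fin.val (σ.injective hc); simp at this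
  have hv0 : (σ 0).val < 2 := (σ 0).isLt
  have hv1 : (σ 1).val < 2 := (σ 1).isLt
  have hne : (σ 0).val ≠ (σ 1).val := fun hh => hinj (Fin.ext hh)
  by_cases h : (σ 0).val = 0
  · left
    have h1 : (σ 1).val = 1 := by omega
    ext x
    fin_cases x
    · simpa using h
    · simpa using h1
  · right
    have h0 : (σ 0).val = 1 := by omega
    have h1 : (σ 1).val = 0 := by omega
    ext x
    fin_cases x
    · simpa [Equiv.swap_apply_left] using h0
    · simpa [Equiv.swap_apply_right] using h1

/-- a real matrix is tropical totally nonnegative iff all its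
2×2 tropical minors are tropically nonnegative (`TNtrop(ℝ) = TN₂trop(ℝ)`). -/
theorem TN_iff_two_by_two_minors (n : ℕ) (A : Matrix (Fin n) (Fin n) ℝ) :
    IsTropTN n (A.map ((↑) : ℝ → WithBot ℝ)) ↔
      ∀ i i' j j' : Fin n, i < i' → j < j' →
        A i j' + A i' j ≤ A i j + A i' j' := by
  constructor
  · intro hTN i i' j j' hii hjj
    have hfin2 : ∀ a b : Fin 2, a < b → a = 0 ∧ b = 1 := by
      intro a b hab
      have hab' : a.val < b.val := hab
      have ha : a.val < 2 := a.isLt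
      have hb : b.val < 2 := b.isLt
      constructor
      · apply Fin.ext; simp; omega
      · apply Fin.ext; simp; omega
    have hrm : StrictMono (![i, i'] : Fin 2 → Fin n) := by
      intro a b hab
      obtain ⟨h0, h1⟩ := hfin2 a b hab
      subst h0; subst h1
      simpa using hii
    have hcm : StrictMono (![j, j'] : Fin 2 → Fin n) := by
      intro a b hab
      obtain ⟨h0, h1⟩ := hfin2 a b hab
      subst h0; subst h1
      simpa using hjj
    have h := hTN 2 ![i, i'] ![j, j'] hrm hcm
    have hswap : (↑(A i j' + A i' j) : WithBot ℝ) ≤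
        tropPermSup 2 (-1) ((A.map ((↑) : ℝ → WithBot ℝ)).submatrix ![i, i'] ![j, j']) := by
      have hmem : Equiv.swap (0 : Fin 2) 1 ∈
          (Finset.univ.filter fun σ : Equiv.Perm (Fin 2) => Equiv.Perm.sign σ = (-1 : ℤˣ)) := by
        simp [Equiv.Perm.sign_swap (by decide : (0 : Fin 2) ≠ 1)]
      refine le_trans ?_ (Finset.le_sup hmem)
      rw [Fin.sum_univ_two]
      simp [Matrix.submatrix_apply, Matrix.map_apply,
        Equiv.swap_apply_left, Equiv.swap_apply_right, ← WithBot.coe_add]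
    have hid : tropPermSup 2 1 ((A.map ((↑) : ℝ → WithBot ℝ)).submatrix ![i, i'] ![j, j'])
        ≤ (↑(A i j + A i' j') : WithBot ℝ) := by
      apply Finset.sup_le
      intro σ hσ
      simp only [Finset.mem_filter] at hσ
      rcases perm_fin_two σ with h1 | h1
      · subst h1
        rw [Fin.sum_univ_two]
        simp [Matrix.submatrix_apply, Matrix.map_apply, ← WithBot.coe_add]
      · exfalso
        rw [h1, Equiv.Perm.sign_swap (by decide : (0 : Fin 2) ≠ 1)] at hσ
        exact absurd hσ.2 (by decide)
    have := le_trans hswap (le_trans h hid)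
    exact_mod_cast this
  · intro h2 k r c hrm hcm
    have hB : ∀ (p p' q q' : Fin k), p < p' → q < q' →
        A (r p) (c q') + A (r p') (c q) ≤ A (r p) (c q) + A (r p') (c q') := by
      intro p p' q q' hp hq
      exact h2 (r p) (r p') (c q) (c q') (hrm hp) (hcm hq)
    have hentry : ∀ p q : Fin k,
        ((A.map ((↑) : ℝ → WithBot ℝ)).submatrix r c) p q = ((A (r p) (c q) : ℝ) : WithBot ℝ) := by
      intro p q; simp [Matrix.submatrix_apply, Matrix.map_apply]
    have hsum : ∀ σ : Equiv.Perm (Fin k),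
        ∑ p, ((A.map ((↑) : ℝ → WithBot ℝ)).submatrix r c) p (σ p)
          = ((∑ p, A (r p) (c (σ p)) : ℝ) : WithBot ℝ) := by
      intro σ
      calc ∑ p, ((A.map ((↑) : ℝ → WithBot ℝ)).submatrix r c) p (σ p)
          = ∑ p, ((A (r p) (c (σ p)) : ℝ) : WithBot ℝ) :=
            Finset.sum_congr rfl fun p _ => hentry p (σ p)
        _ = ((∑ p, A (r p) (c (σ p)) : ℝ) : WithBot ℝ) := by norm_cast
    have hid : ((∑ p, A (r p) (c p) : ℝ) : WithBot ℝ) ≤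
        tropPermSup k 1 ((A.map ((↑) : ℝ → WithBot ℝ)).submatrix r c) := by
      have hmem : (1 : Equiv.Perm (Fin k)) ∈
          (Finset.univ.filter fun σ : Equiv.Perm (Fin k) => Equiv.Perm.sign σ = (1 : ℤˣ)) := by
        simp
      refine le_trans ?_ (Finset.le_sup hmem)
      rw [hsum 1]
      simp
    apply Finset.sup_le
    intro σ hσ
    rw [hsum σ]
    refine le_trans ?_ hid
    have := monge_sum_perm_le (fun p q => A (r p) (c q)) hB σ
    exact_mod_cast this
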